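/- arXiv:1505.06516 — 4 statements merged into one kernel-verified Lean document; each statement's English description precedes it below -/
import Mathlib

section
/- For every positive integer q and real x > 0, the Kubert identity holds: q^s · ζ(s, x) = ∑_{r=0}^{q−1} ζ(s, (r+x)/q), for all s ≠ 1 in the domain of analytic continuation. -/
open Complex Finset

lemma div_cpow_aux {a q : ℝ} (ha : 0 ≤ a) (hq : 0 < q) (s : ℂ) :
    ((a / q : ℝ) : ℂ) ^ s = (a : ℂ) ^ s / (q : ℂ) ^ s := by
  rw [div_eq_mul_inv, Complex.ofReal_mul, Complex.mul_cpow_ofReal_nonneg ha (inv_nonneg.mpr hq.le),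
    Complex.ofReal_inv, Complex.inv_cpow _ _ (by
      rw [Complex.arg_ofReal_of_nonneg hq.le]; exact Real.pi_ne_zero.symm),
    div_eq_mul_inv]

theorem kubert_series (Z : ℝ → ℂ → ℂ)
    (hser : ∀ (x : ℝ), 0 < x → ∀ s : ℂ, 1 < s.re →
      HasSum (fun n : ℕ => 1 / ((n : ℂ) + (x : ℂ)) ^ s) (Z x s))
    (q : ℕ) (hq : 0 < q) (x : ℝ) (hx : 0 < x) (s : ℂ) (hs : 1 < s.re) :
    (q : ℂ) ^ s * Z x s = ∑ r ∈ Finset.range q, Z ((r + x) / q) s := by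
  haveI : NeZero q := ⟨hq.ne'⟩
  have hq' : (0:ℝ) < q := Nat.cast_pos.mpr hq
  -- sum over ℕ multiplied by q^s
  have h1 : HasSum (fun n : ℕ => (q:ℂ)^s * (1 / ((n : ℂ) + (x : ℂ)) ^ s))
      ((q:ℂ)^s * Z x s) := (hser x hx s hs).mul_left _
  -- reindex by (m, r) ↦ m*q + r
  have h2 : HasSum (fun p : ℕ × Fin q => (q:ℂ)^s *
      (1 / (((p.1 * q + (p.2:ℕ) : ℕ) : ℂ) + (x : ℂ)) ^ s)) ((q:ℂ)^s * Z x s) := by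
    have h := ((Nat.divModEquiv q).symm.hasSum_iff
      (f := fun n : ℕ => (q:ℂ)^s * (1 / ((n : ℂ) + (x : ℂ)) ^ s))).mpr h1
    simpa only [Function.comp_def, Nat.divModEquiv_symm_apply] using h
  -- rewrite the summand
  have key : ∀ p : ℕ × Fin q, (q:ℂ)^s *
      (1 / (((p.1 * q + (p.2:ℕ) : ℕ) : ℂ) + (x : ℂ)) ^ s)
      = 1 / ((p.1 : ℂ) + ((((p.2:ℕ) + x) / q : ℝ) : ℂ)) ^ s := by
    rintro ⟨m, r⟩
    have hb : (0:ℝ) ≤ (m * q + (r:ℕ) : ℕ) + x := by positivity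
    have e1 : (m : ℂ) + ((((r:ℕ) + x) / q : ℝ) : ℂ)
        = (((((m * q + (r:ℕ) : ℕ) : ℝ) + x) / q : ℝ) : ℂ) := by
      have hq0 : (q:ℂ) ≠ 0 := Nat.cast_ne_zero.mpr hq.ne'
      push_cast
      field_simp
      ring
    rw [e1, div_cpow_aux hb hq', one_div_div]
    push_cast
    rw [mul_one_div]
  rw [funext key] at h2
  -- fiberwise sums
  have h3 : ∀ r : Fin q, HasSum (fun m : ℕ =>
      1 / ((m : ℂ) + ((((r:ℕ) + x) / q : ℝ) : ℂ)) ^ s) (Z (((r:ℕ) + x) / q) s) :=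
    fun r => hser _ (by positivity) s hs
  have h4 : HasSum (fun r : Fin q => Z (((r:ℕ) + x) / q) s) ((q:ℂ)^s * Z x s) := by
    refine (((Equiv.prodComm (Fin q) ℕ).hasSum_iff).mpr h2).prod_fiberwise fun r => ?_
    exact h3 r
  have := h4.tsum_eq
  rw [tsum_fintype] at this
  rw [← this, ← Fin.sum_univ_eq_sum_range]

/-- The Kubert identity `qˢ ζ(s,x) = ∑_{r=0}^{q-1} ζ(s, (r+x)/q)` for the Hurwitz zeta function,
formulated for any function `Z` such that `Z x` is the analytic continuation in `s` of the
Hurwitz zeta series `∑ (n+x)⁻ˢ`. -/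
theorem kubert_identity (Z : ℝ → ℂ → ℂ)
    (hser : ∀ (x : ℝ), 0 < x → ∀ s : ℂ, 1 < s.re →
      HasSum (fun n : ℕ => 1 / ((n : ℂ) + (x : ℂ)) ^ s) (Z x s))
    (hdiff : ∀ (x : ℝ), 0 < x → ∀ s : ℂ, s ≠ 1 → DifferentiableAt ℂ (Z x) s)
    (q : ℕ) (hq : 0 < q) (x : ℝ) (hx : 0 < x) (s : ℂ) (hs : s ≠ 1) :
    (q : ℂ) ^ s * Z x s = ∑ r ∈ Finset.range q, Z ((r + x) / q) s := by
  have hq' : (0:ℝ) < q := Nat.cast_pos.mpr hq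
  have hpc : IsPreconnected ({1}ᶜ : Set ℂ) :=
    (isConnected_compl_singleton_of_one_lt_rank (rank_real_complex ▸ Nat.one_lt_ofNat) _)
      |>.isPreconnected
  have hne : (2:ℂ) ∈ ({1}ᶜ : Set ℂ) := by norm_num
  have heq : Set.EqOn (fun t => (q:ℂ)^t * Z x t)
      (fun t => ∑ r ∈ Finset.range q, Z ((r + x) / q) t) {1}ᶜ := by
    refine AnalyticOnNhd.eqOn_of_preconnected_of_eventuallyEq (𝕜 := ℂ) ?_ ?_ hpc hne ?_
    · refine DifferentiableOn.analyticOnNhd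
        (fun t ht => DifferentiableAt.differentiableWithinAt ?_) isOpen_compl_singleton
      exact (differentiableAt_id.const_cpow (Or.inl (Nat.cast_ne_zero.mpr hq.ne'))).mul
        (hdiff x hx t ht)
    · refine DifferentiableOn.analyticOnNhd
        (fun t ht => DifferentiableAt.differentiableWithinAt ?_) isOpen_compl_singleton
      exact DifferentiableAt.fun_sum fun r _ => hdiff _ (by positivity) t ht
    · have hopen : IsOpen {z : ℂ | 1 < z.re} := isOpen_lt continuous_const Complex.continuous_re
      filter_upwards [hopen.mem_nhds (by norm_num : (2:ℂ) ∈ {z : ℂ | 1 < z.re})] with t ht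
      exact kubert_series Z hser q hq x hx t ht
  exact heq hs
end

section
/- Gauss's multiplication theorem: for every positive integer q and real x > 0, log Γ(x) = ∑_{r=0}^{q−1} log Γ((r+x)/q) − ((q−1)/2)·log(2π) − (1/2 − x)·log q. -/
open Real

open Filter Finset Topology


noncomputable def Elog (n : ℕ) : ℝ :=
  Real.log n.factorial - (1/2) * Real.log n - n * Real.log n + n

theorem tendsto_Elog :
    Tendsto Elog atTop (𝓝 ((1/2) * Real.log (2 * π))) := by
  have h1 : Tendsto (fun n => Real.log (Stirling.stirlingSeq n)) atTop
      (𝓝 (Real.log (Real.sqrt π))) :=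
    Stirling.tendsto_stirlingSeq_sqrt_pi.log (Real.sqrt_ne_zero'.2 pi_pos)
  have h2 : ∀ᶠ n : ℕ in atTop,
      Real.log (Stirling.stirlingSeq n) + (1/2) * Real.log 2 = Elog n := by
    filter_upwards [eventually_ge_atTop 1] with n hn
    have hn0 : (0:ℝ) < n := by exact_mod_cast hn
    rw [Stirling.log_stirlingSeq_formula, Real.log_mul two_ne_zero hn0.ne',
      Real.log_div hn0.ne' (Real.exp_ne_zero 1), Real.log_exp, Elog]
    ring
  have := (h1.add_const ((1/2) * Real.log 2)).congr' h2
  convert this using 2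
  rw [Real.log_sqrt pi_pos.le, Real.log_mul two_ne_zero pi_pos.ne']
  ring

theorem sum_range_mul_eq {M : Type*} [AddCommMonoid M] (f : ℕ → M) (q n : ℕ) (hq : 0 < q) :
    ∑ k ∈ Finset.range (q * n), f k
      = ∑ r ∈ Finset.range q, ∑ m ∈ Finset.range n, f (r + q * m) := by
  rw [← Finset.sum_product']
  refine Finset.sum_nbij' (fun k => (k % q, k / q)) (fun p => p.1 + q * p.2) ?_ ?_ ?_ ?_ ?_
  · intro k hk
    simp only [Finset.mem_range] at hk
    simp only [Finset.mem_product, Finset.mem_range]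
    exact ⟨Nat.mod_lt _ hq, Nat.div_lt_of_lt_mul hk⟩
  · intro p hp
    simp only [Finset.mem_product, Finset.mem_range] at hp
    simp only [Finset.mem_range]
    calc p.1 + q * p.2 < q + q * p.2 := by omega
    _ = q * (p.2 + 1) := by ring
    _ ≤ q * n := Nat.mul_le_mul_left _ hp.2
  · intro k _
    simp [Nat.mod_add_div]
  · intro p hp
    simp only [Finset.mem_product, Finset.mem_range] at hp
    have h1 : (p.1 + q * p.2) % q = p.1 := by
      rw [Nat.add_mul_mod_self_left, Nat.mod_eq_of_lt hp.1]
    have h2 : (p.1 + q * p.2) / q = p.2 := by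
      rw [Nat.add_mul_div_left _ _ hq, Nat.div_eq_of_lt hp.1, zero_add]
    simp [h1, h2]
  · intro k _
    rw [Nat.mod_add_div]

theorem gauss_multiplication (q : ℕ) (hq : 0 < q) (x : ℝ) (hx : 0 < x) :
    Real.log (Real.Gamma x) =
      (∑ r ∈ Finset.range q, Real.log (Real.Gamma ((r + x) / q)))
        - ((q : ℝ) - 1) / 2 * Real.log (2 * π) - (1 / 2 - x) * Real.log q := by
  set Q : ℝ := (q : ℝ) with hQdef
  have hQ : (0:ℝ) < Q := by simp only [hQdef]; exact_mod_cast hq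
  have hQ1 : (1:ℝ) ≤ Q := by simp only [hQdef]; exact_mod_cast hq
  set N : ℕ → ℕ := fun n => q * n + (q - 1) with hNdef
  have hNr : ∀ n : ℕ, ((N n : ℕ) : ℝ) = Q * n + Q - 1 := by
    intro n
    have : (N n : ℕ) + 1 = q * n + q := by simp only [hNdef]; omega
    have := congrArg (fun m : ℕ => (m : ℝ)) this
    push_cast at this
    linarith
  set L : ℝ → ℕ → ℝ := Real.BohrMollerup.logGammaSeq with hLdef
  set F : ℕ → ℝ := fun n => (∑ r ∈ Finset.range q, L ((r + x) / Q) n) - L x (N n) with hFdef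
  set S : ℝ := ∑ r ∈ Finset.range q, Real.log (Real.Gamma ((r + x) / Q)) with hSdef
  -- Step 1 : F → S - log Γ x
  have hNtop : Tendsto N atTop atTop := by
    apply tendsto_atTop_mono (fun n => ?_) tendsto_id
    simp only [hNdef, id]
    calc n = 1 * n := (one_mul n).symm
    _ ≤ q * n := Nat.mul_le_mul_right n hq
    _ ≤ q * n + (q - 1) := Nat.le_add_right _ _
  have hF : Tendsto F atTop (𝓝 (S - Real.log (Real.Gamma x))) := by
    apply Tendsto.sub
    · apply tendsto_finset_sum
      intro r _
      exact Real.BohrMollerup.tendsto_log_gamma (by positivity)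
    · exact (Real.BohrMollerup.tendsto_log_gamma hx).comp hNtop
  -- Step 2 : explicit formula for F n, n ≥ 1
  set G : ℕ → ℝ := fun n =>
    Q * Elog n - Elog (N n) + (1/2 - x) * Real.log Q + (Q - 1)
      - (x + Q * n + Q - 1/2) * Real.log ((N n : ℝ) / (Q * n)) with hGdef
  have hFG : ∀ n : ℕ, 1 ≤ n → F n = G n := by
    intro n hn
    have hn0 : (0:ℝ) < n := by exact_mod_cast hn
    have hNpos : (0:ℝ) < (N n : ℝ) := by rw [hNr]; nlinarith [hQ1, hn0]
    -- Gauss sum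
    have hgauss : ∑ r ∈ Finset.range q, ((r : ℝ) + x) / Q = x + (Q - 1) / 2 := by
      rw [← Finset.sum_div]
      have h2 : (∑ r ∈ Finset.range q, ((r : ℝ) + x)) = Q * (Q - 1) / 2 + Q * x := by
        rw [Finset.sum_add_distrib, Finset.sum_const, Finset.card_range, nsmul_eq_mul]
        have := Finset.sum_range_id_mul_two q
        have hc : ((∑ i ∈ Finset.range q, i : ℕ) : ℝ) * 2 = Q * (Q - 1) := by
          rw_mod_cast [this]
          push_cast [Nat.cast_sub hq]
          ring
        push_cast at hc ⊢
        linarith [hc]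
      rw [h2]
      field_simp
      ring
    -- the double sum
    have hdouble : ∑ r ∈ Finset.range q, ∑ m ∈ Finset.range (n + 1),
          Real.log (((r : ℝ) + x) / Q + m)
        = (∑ k ∈ Finset.range (N n + 1), Real.log (x + k)) - ((N n : ℝ) + 1) * Real.log Q := by
      have hre := sum_range_mul_eq (fun k : ℕ => Real.log ((x + k) / Q)) q (n + 1) hq
      have hqe : q * (n + 1) = N n + 1 := by show q * (n + 1) = q * n + (q - 1) + 1; rw [Nat.mul_succ]; omega
      rw [hqe] at hre
      have hcongr : ∀ r ∈ Finset.range q, ∀ m ∈ Finset.range (n + 1),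
          Real.log ((x + ((r + q * m : ℕ) : ℝ)) / Q) = Real.log (((r : ℝ) + x) / Q + m) := by
        intro r _ m _
        congr 1
        push_cast
        field_simp
        ring
      calc ∑ r ∈ Finset.range q, ∑ m ∈ Finset.range (n + 1), Real.log (((r : ℝ) + x) / Q + m)
          = ∑ r ∈ Finset.range q, ∑ m ∈ Finset.range (n + 1),
              Real.log ((x + ((r + q * m : ℕ) : ℝ)) / Q) := by
            refine Finset.sum_congr rfl fun r hr => Finset.sum_congr rfl fun m hm => ?_
            exact (hcongr r hr m hm).symm
        _ = ∑ k ∈ Finset.range (N n + 1), Real.log ((x + k) / Q) := hre.symm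
        _ = ∑ k ∈ Finset.range (N n + 1), (Real.log (x + k) - Real.log Q) := by
            refine Finset.sum_congr rfl fun k _ => ?_
            exact Real.log_div (by positivity) hQ.ne'
        _ = (∑ k ∈ Finset.range (N n + 1), Real.log (x + k)) - ((N n : ℝ) + 1) * Real.log Q := by
            rw [Finset.sum_sub_distrib, Finset.sum_const, Finset.card_range, nsmul_eq_mul]
            push_cast [Nat.cast_sub hq]
            ring
    -- unfold logGammaSeq
    have hL : ∀ y : ℝ, ∀ m : ℕ, L y m =
        y * Real.log m + Real.log m.factorial - ∑ k ∈ Finset.range (m + 1), Real.log (y + k) :=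
      fun y m => rfl
    have hfact : ∀ m : ℕ, Real.log m.factorial =
        Elog m + (1/2) * Real.log m + m * Real.log m - m := by
      intro m; simp [Elog]; ring
    -- decomposition of log (N n)
    have hlogN : Real.log ((N n : ℝ)) =
        Real.log Q + Real.log n + Real.log ((N n : ℝ) / (Q * n)) := by
      have h1 : (N n : ℝ) = (Q * n) * ((N n : ℝ) / (Q * n)) := by
        field_simp
      rw [h1, Real.log_mul (by positivity) (by positivity), Real.log_mul hQ.ne' hn0.ne']
      rw [← h1]
    -- put it together
    simp only [hFdef, hGdef]
    rw [hL x (N n)]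
    conv_lhs => rw [show (∑ r ∈ Finset.range q, L ((r + x) / Q) n) =
      ∑ r ∈ Finset.range q, (((r : ℝ) + x) / Q * Real.log n + Real.log n.factorial
        - ∑ k ∈ Finset.range (n + 1), Real.log (((r : ℝ) + x) / Q + k)) from
      Finset.sum_congr rfl fun r _ => hL _ n]
    rw [Finset.sum_sub_distrib, Finset.sum_add_distrib, ← Finset.sum_mul, hgauss, hdouble,
      Finset.sum_const, Finset.card_range, hfact n, hfact (N n), hlogN, hNr n]
    push_cast
    ring
  -- Step 3 : limit of G
  have hC : Tendsto G atTop (𝓝 ((Q - 1) / 2 * Real.log (2 * π) + (1/2 - x) * Real.log Q)) := by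
    have t1 : Tendsto (fun n : ℕ => Q * Elog n) atTop (𝓝 (Q * ((1/2) * Real.log (2 * π)))) :=
      tendsto_Elog.const_mul Q
    have t2 : Tendsto (fun n : ℕ => Elog (N n)) atTop (𝓝 ((1/2) * Real.log (2 * π))) :=
      tendsto_Elog.comp hNtop
    have t3 : Tendsto (fun n : ℕ => (x + Q * n + Q - 1/2) * Real.log ((N n : ℝ) / (Q * n)))
        atTop (𝓝 (Q - 1)) := by
      have hQn : Tendsto (fun n : ℕ => Q * n) atTop atTop :=
        (tendsto_natCast_atTop_atTop (R := ℝ)).const_mul_atTop hQ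
      have ta : Tendsto (fun n : ℕ => (Q * n) * Real.log (1 + (Q - 1) / (Q * n))) atTop
          (𝓝 (Q - 1)) := (Real.tendsto_mul_log_one_add_div_atTop (Q - 1)).comp hQn
      have tb : Tendsto (fun n : ℕ => (x + Q - 1/2) / Q / n + 1) atTop (𝓝 1) := by
        have := (tendsto_const_div_atTop_nhds_zero_nat ((x + Q - 1/2) / Q)).add_const 1
        simpa using this
      have := tb.mul ta
      rw [one_mul] at this
      apply this.congr'
      filter_upwards [eventually_ge_atTop 1] with n hn
      have hn0 : (0:ℝ) < n := by exact_mod_cast hn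
      have h1 : (1 : ℝ) + (Q - 1) / (Q * n) = (N n : ℝ) / (Q * n) := by
        rw [hNr]; field_simp; ring
      rw [h1]
      have h2 : ((x + Q - 1/2) / Q / n + 1) * (Q * n) = x + Q * n + Q - 1/2 := by
        field_simp; ring
      rw [← h2]; ring
    have := (((t1.sub t2).add_const ((1/2 - x) * Real.log Q)).add_const (Q - 1)).sub t3
    have heq : (Q - 1) / 2 * Real.log (2 * π) + (1/2 - x) * Real.log Q
        = Q * ((1/2) * Real.log (2 * π)) - (1/2) * Real.log (2 * π)
          + (1/2 - x) * Real.log Q + (Q - 1) - (Q - 1) := by ring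
    rw [heq]
    exact this
  -- Step 4 : conclude
  have hFG' : Tendsto F atTop (𝓝 ((Q - 1) / 2 * Real.log (2 * π) + (1/2 - x) * Real.log Q)) := by
    apply hC.congr'
    filter_upwards [eventually_ge_atTop 1] with n hn
    exact (hFG n hn).symm
  have := tendsto_nhds_unique hF hFG'
  rw [hSdef] at this
  linarith [this]
end

section
/- For positive integers p < q, ∑_{j=1}^{q} sin(2πjp/q)·ψ(j/q) = πq·(p/q − 1/2). -/
open Real

/-- The digamma function `ψ = Γ'/Γ`. -/
noncomputable def digamma (x : ℝ) : ℝ := deriv Real.Gamma x / Real.Gamma x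

lemma digamma_reflect {x : ℝ} (h0 : 0 < x) (h1 : x < 1) :
    digamma x - digamma (1 - x) = -(π * (Real.cos (π * x) / Real.sin (π * x))) := by
  have hne : ∀ {y : ℝ}, 0 < y → ∀ m : ℕ, y ≠ -(m:ℝ) := by
    intro y hy m
    have : (0:ℝ) ≤ m := Nat.cast_nonneg m
    intro h; rw [h] at hy; linarith
  have hGx : DifferentiableAt ℝ Real.Gamma x := Real.differentiableAt_Gamma (hne h0)
  have hGx' : DifferentiableAt ℝ Real.Gamma (1 - x) :=
    Real.differentiableAt_Gamma (hne (by linarith))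
  have hpos : 0 < Real.Gamma x := Real.Gamma_pos_of_pos h0
  have hpos' : 0 < Real.Gamma (1 - x) := Real.Gamma_pos_of_pos (by linarith)
  have hsin : Real.sin (π * x) ≠ 0 :=
    ne_of_gt (Real.sin_pos_of_pos_of_lt_pi (by positivity)
      (by nlinarith [Real.pi_pos]))
  have hd1 : HasDerivAt (fun y => Real.Gamma y * Real.Gamma (1 - y))
      (deriv Real.Gamma x * Real.Gamma (1 - x) +
        Real.Gamma x * (deriv Real.Gamma (1 - x) * (-1))) x := by
    have h2 : HasDerivAt (fun y : ℝ => Real.Gamma (1 - y))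
        (deriv Real.Gamma (1 - x) * (-1)) x :=
      hGx'.hasDerivAt.comp x ((hasDerivAt_id x).const_sub 1)
    exact hGx.hasDerivAt.mul h2
  have hd2 : HasDerivAt (fun y : ℝ => π / Real.sin (π * y))
      (π * (-(Real.cos (π * x) * π) / (Real.sin (π * x))^2)) x := by
    have hs : HasDerivAt (fun y : ℝ => Real.sin (π * y)) (Real.cos (π * x) * π) x := by
      simpa [Function.comp_def] using
        (Real.hasDerivAt_sin (π * x)).comp x ((hasDerivAt_id x).const_mul π)
    simpa [div_eq_mul_inv] using (hs.inv hsin).const_mul π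
  have hfun : (fun y : ℝ => Real.Gamma y * Real.Gamma (1 - y)) =
      fun y : ℝ => π / Real.sin (π * y) :=
    funext fun y => Real.Gamma_mul_Gamma_one_sub y
  rw [hfun] at hd1
  have E := hd1.unique hd2
  have hprod : Real.Gamma x * Real.Gamma (1 - x) = π / Real.sin (π * x) :=
    Real.Gamma_mul_Gamma_one_sub x
  unfold digamma
  rw [div_sub_div _ _ hpos.ne' hpos'.ne', div_eq_iff (mul_ne_zero hpos.ne' hpos'.ne'), hprod]
  linear_combination E


lemma cos_sum_zero (m q : ℕ) (hm : 0 < m) (hmq : m < q) :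
    ∑ j ∈ Finset.range q, Real.cos (2 * π * j * m / q) = 0 := by
  have hq : (0:ℝ) < q := by exact_mod_cast hm.trans hmq
  set a : ℝ := 2 * π * m / q with ha
  set ζ : ℂ := Complex.exp (a * Complex.I) with hζ
  have hzj : ∀ j : ℕ, ζ ^ j = Complex.exp ((j * a : ℝ) * Complex.I) := by
    intro j
    rw [hζ, ← Complex.exp_nat_mul]
    push_cast
    ring_nf
  have hre : ∀ j : ℕ, Real.cos (2 * π * j * m / q) = (ζ ^ j).re := by
    intro j
    rw [hzj j, Complex.exp_ofReal_mul_I_re]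
    congr 1
    rw [ha]
    ring
  have hζq : ζ ^ q = 1 := by
    rw [hzj q]
    have : ((q : ℝ) * a : ℝ) = (m : ℤ) * (2 * π) := by
      rw [ha]; push_cast; field_simp
    rw [this]
    push_cast
    rw [mul_assoc]
    exact Complex.exp_nat_mul_two_pi_mul_I m
  have hζ1 : ζ ≠ 1 := by
    rw [hζ, Ne, Complex.exp_eq_one_iff]
    rintro ⟨n, hn⟩
    have hI : (a : ℂ) = n * (2 * π) := by
      rw [show ((n:ℂ) * (2 * ↑π * Complex.I)) = ((n:ℂ) * (2 * ↑π)) * Complex.I by ring] at hn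
      exact mul_right_cancel₀ Complex.I_ne_zero hn
    have hr : a = (n : ℝ) * (2 * π) := by exact_mod_cast hI
    have hpi := Real.pi_pos
    have h0a : 0 < a := by rw [ha]; positivity
    have h1a : a < 2 * π := by
      rw [ha]
      rw [div_lt_iff₀ hq]
      have : (m : ℝ) < q := by exact_mod_cast hmq
      nlinarith
    have hn0 : 0 < (n:ℝ) := by nlinarith
    have hn1 : (n:ℝ) < 1 := by nlinarith
    have : (0:ℤ) < n := by exact_mod_cast hn0
    have : (n:ℤ) < 1 := by exact_mod_cast hn1
    omega
  have hsum : ∑ j ∈ Finset.range q, ζ ^ j = 0 := by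
    rw [geom_sum_eq hζ1, hζq]
    simp
  calc ∑ j ∈ Finset.range q, Real.cos (2 * π * j * m / q)
      = (∑ j ∈ Finset.range q, ζ ^ j).re := by
        rw [Complex.re_sum]; exact Finset.sum_congr rfl fun j _ => hre j
    _ = 0 := by rw [hsum]; simp

lemma sin_mul_cos_eq (p : ℕ) (θ : ℝ) :
    Real.sin (2 * p * θ) * Real.cos θ =
      Real.sin θ * ∑ k ∈ Finset.range p,
        (Real.cos (2 * k * θ) + Real.cos (2 * (k + 1) * θ)) := by
  induction p with
  | zero => simp
  | succ n ih =>
    rw [Finset.sum_range_succ, mul_add, ← ih]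
    have h1 : (2 * ((n:ℝ)+1) * θ) = 2 * n * θ + 2 * θ := by ring
    push_cast
    rw [h1, Real.sin_add, Real.cos_add, Real.sin_two_mul, Real.cos_two_mul]
    have h2 := Real.sin_sq_add_cos_sq θ
    linear_combination (2 * Real.sin (2 * (n:ℝ) * θ) * Real.cos θ) * h2

lemma icc_cos_sum (m q : ℕ) (hm : 0 < m) (hmq : m < q) :
    ∑ j ∈ Finset.Icc 1 (q - 1), Real.cos (2 * π * j * m / q) = -1 := by
  have hq : 0 < q := hm.trans hmq
  have hsplit : Finset.range q = insert 0 (Finset.Icc 1 (q - 1)) := by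
    ext x; simp only [Finset.mem_range, Finset.mem_insert, Finset.mem_Icc]; omega
  have h0 : (0:ℕ) ∉ Finset.Icc 1 (q - 1) := by simp
  have := cos_sum_zero m q hm hmq
  rw [hsplit, Finset.sum_insert h0] at this
  have h00 : Real.cos (2 * π * (0:ℕ) * m / q) = 1 := by norm_num
  rw [h00] at this
  linarith

lemma icc_cos_sum_zero (q : ℕ) (hq : 0 < q) :
    ∑ j ∈ Finset.Icc 1 (q - 1), Real.cos (2 * π * j * (0:ℕ) / q) = (q:ℝ) - 1 := by
  have : ∀ j ∈ Finset.Icc 1 (q-1), Real.cos (2 * π * j * (0:ℕ) / q) = 1 := by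
    intro j _; norm_num
  rw [Finset.sum_congr rfl this, Finset.sum_const, Nat.card_Icc]
  have : q - 1 + 1 - 1 = q - 1 := by omega
  rw [this, nsmul_eq_mul, mul_one, Nat.cast_sub hq]
  simp

lemma cot_sum (p q : ℕ) (hp : 0 < p) (hpq : p < q) :
    ∑ j ∈ Finset.Icc 1 (q - 1),
      Real.sin (2 * π * j * p / q) * (Real.cos (π * j / q) / Real.sin (π * j / q)) =
      (q:ℝ) - 2 * p := by
  have hq : 0 < q := hp.trans hpq
  have hqR : (0:ℝ) < q := by exact_mod_cast hq
  have hterm : ∀ j ∈ Finset.Icc 1 (q - 1),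
      Real.sin (2 * π * j * p / q) * (Real.cos (π * j / q) / Real.sin (π * j / q)) =
      ∑ k ∈ Finset.range p, (Real.cos (2 * π * j * k / q) + Real.cos (2 * π * j * (k+1) / q)) := by
    intro j hj
    rw [Finset.mem_Icc] at hj
    have hj1 : (1:ℝ) ≤ j := by exact_mod_cast hj.1
    have hjq : (j:ℝ) ≤ (q:ℝ) - 1 := by
      have : (j:ℝ) ≤ ((q-1:ℕ):ℝ) := by exact_mod_cast hj.2
      rw [Nat.cast_sub hq] at this; simpa using this
    set θ : ℝ := π * j / q with hθ
    have hs : 0 < Real.sin θ := by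
      apply Real.sin_pos_of_pos_of_lt_pi
      · rw [hθ]; positivity
      · rw [hθ, div_lt_iff₀ hqR]
        nlinarith [Real.pi_pos]
    have e1 : 2 * π * (j:ℝ) * p / q = 2 * (p:ℝ) * θ := by rw [hθ]; ring
    have e2 : ∀ k : ℕ, 2 * π * (j:ℝ) * k / q = 2 * (k:ℝ) * θ := by intro k; rw [hθ]; ring
    have e3 : ∀ k : ℕ, 2 * π * (j:ℝ) * (k+1) / q = 2 * ((k:ℝ)+1) * θ := by
      intro k; rw [hθ]; push_cast; ring
    rw [e1]
    rw [Finset.sum_congr rfl (fun k _ => by rw [e2 k, e3 k])]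
    rw [mul_div_assoc' , sin_mul_cos_eq p θ, mul_div_assoc]
    field_simp
    exact Finset.sum_congr rfl fun k _ => by ring_nf
  obtain ⟨m, rfl⟩ : ∃ m, p = m + 1 := ⟨p - 1, by omega⟩
  rw [Finset.sum_congr rfl hterm, Finset.sum_comm]
  set C : ℕ → ℝ := fun n => ∑ j ∈ Finset.Icc 1 (q-1), Real.cos (2 * π * j * n / q) with hC
  have hCval : ∀ n, 0 < n → n < q → C n = -1 := fun n h1 h2 => icc_cos_sum n q h1 h2
  have hC0 : C 0 = (q:ℝ) - 1 := by
    exact icc_cos_sum_zero q hq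
  have hstep : ∀ j ∈ Finset.range (m+1),
      (∑ k ∈ Finset.Icc 1 (q-1),
        (Real.cos (2 * π * k * j / q) + Real.cos (2 * π * k * (j+1) / q))) = C j + C (j+1) := by
    intro j _
    rw [hC, Finset.sum_add_distrib]
    norm_num
  rw [Finset.sum_congr rfl (fun j hj => by
    have := hstep j hj
    simpa using this)]
  rw [Finset.sum_add_distrib, Finset.sum_range_succ']
  have h1 : ∀ k ∈ Finset.range m, C (k+1) = -1 := fun k hk =>
    hCval (k+1) (Nat.succ_pos k) (by rw [Finset.mem_range] at hk; omega)
  have h2 : ∀ k ∈ Finset.range (m+1), C (k+1) = -1 := fun k hk =>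
    hCval (k+1) (Nat.succ_pos k) (by rw [Finset.mem_range] at hk; omega)
  rw [Finset.sum_congr rfl h1, Finset.sum_congr rfl h2, hC0, Finset.sum_const, Finset.sum_const]
  simp only [Finset.card_range]
  push_cast
  ring

theorem sum_sin_digamma (p q : ℕ) (hp : 0 < p) (hpq : p < q) :
    ∑ j ∈ Finset.Icc 1 q, Real.sin (2 * π * j * p / q) * digamma (j / q) =
      π * q * ((p : ℝ) / q - 1 / 2) := by
  have hq : 0 < q := hp.trans hpq
  have hqR : (0:ℝ) < q := by exact_mod_cast hq
  have hqne : q ∉ Finset.Icc 1 (q-1) := by simp only [Finset.mem_Icc]; omega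
  have hins : Finset.Icc 1 q = insert q (Finset.Icc 1 (q-1)) := by
    ext x; simp only [Finset.mem_Icc, Finset.mem_insert]; omega
  rw [hins, Finset.sum_insert hqne]
  have hsin2pi : Real.sin ((p:ℝ) * (2 * π)) = 0 := by
    rw [show (p:ℝ) * (2 * π) = ((2*p:ℕ):ℝ) * π by push_cast; ring]
    exact Real.sin_nat_mul_pi _
  have hcos2pi : Real.cos ((p:ℝ) * (2 * π)) = 1 := Real.cos_nat_mul_two_pi p
  have hzero : Real.sin (2 * π * (q:ℝ) * p / q) = 0 := by
    have h : 2 * π * (q:ℝ) * p / q = (p:ℝ) * (2 * π) := by field_simp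
    rw [h]; exact hsin2pi
  rw [hzero, zero_mul, zero_add]
  set S := ∑ j ∈ Finset.Icc 1 (q-1), Real.sin (2 * π * j * p / q) * digamma (j / q) with hS
  have hflip : S = ∑ j ∈ Finset.Icc 1 (q-1),
      Real.sin (2 * π * ((q - j : ℕ):ℝ) * p / q) * digamma (((q - j : ℕ):ℝ) / q) := by
    rw [hS]
    refine Finset.sum_nbij' (fun j => q - j) (fun j => q - j) ?_ ?_ ?_ ?_ ?_
    · intro a ha; rw [Finset.mem_Icc] at ha ⊢; omega
    · intro a ha; rw [Finset.mem_Icc] at ha ⊢; omega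
    · intro a ha; rw [Finset.mem_Icc] at ha; omega
    · intro a ha; rw [Finset.mem_Icc] at ha; omega
    · intro a ha; rw [Finset.mem_Icc] at ha
      have : q - (q - a) = a := by omega
      rw [this]
  have hpair : ∀ j ∈ Finset.Icc 1 (q-1),
      Real.sin (2 * π * j * p / q) * digamma (j / q) +
        Real.sin (2 * π * ((q - j : ℕ):ℝ) * p / q) * digamma (((q - j : ℕ):ℝ) / q) =
      -π * (Real.sin (2 * π * j * p / q) * (Real.cos (π * j / q) / Real.sin (π * j / q))) := by
    intro j hj
    rw [Finset.mem_Icc] at hj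
    have hj1 : (1:ℝ) ≤ j := by exact_mod_cast hj.1
    have hjq : (j:ℝ) ≤ (q:ℝ) - 1 := by
      have h := hj.2
      have : (j:ℝ) ≤ ((q-1:ℕ):ℝ) := by exact_mod_cast h
      rwa [Nat.cast_sub hq, Nat.cast_one] at this
    have hc1 : ((q - j : ℕ):ℝ) = (q:ℝ) - j := by
      rw [Nat.cast_sub (by omega)]
    have hc2 : ((q:ℝ) - j) / q = 1 - (j:ℝ)/q := by field_simp
    have hc3 : Real.sin (2 * π * ((q:ℝ) - j) * p / q) = -Real.sin (2 * π * j * p / q) := by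
      have h : 2 * π * ((q:ℝ) - j) * p / q = (p:ℝ) * (2 * π) - 2 * π * j * p / q := by
        field_simp
      rw [h, Real.sin_sub, hsin2pi, hcos2pi]
      ring
    rw [hc1, hc2, hc3]
    have h0 : 0 < (j:ℝ)/q := by positivity
    have h1 : (j:ℝ)/q < 1 := by rw [div_lt_one hqR]; linarith
    have := digamma_reflect h0 h1
    have hπ : π * ((j:ℝ)/q) = π * j / q := by ring
    rw [hπ] at this
    linear_combination (Real.sin (2 * π * (j:ℝ) * p / q)) * this
  have h2S : S + S = -π * ((q:ℝ) - 2 * p) := by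
    calc S + S = ∑ j ∈ Finset.Icc 1 (q-1),
          (Real.sin (2 * π * j * p / q) * digamma (j / q) +
            Real.sin (2 * π * ((q - j : ℕ):ℝ) * p / q) * digamma (((q - j : ℕ):ℝ) / q)) := by
          rw [Finset.sum_add_distrib, ← hS, ← hflip]
      _ = ∑ j ∈ Finset.Icc 1 (q-1),
            -π * (Real.sin (2 * π * j * p / q) * (Real.cos (π * j / q) / Real.sin (π * j / q))) :=
          Finset.sum_congr rfl hpair
      _ = -π * ∑ j ∈ Finset.Icc 1 (q-1),
            Real.sin (2 * π * j * p / q) * (Real.cos (π * j / q) / Real.sin (π * j / q)) := by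
          rw [Finset.mul_sum]
      _ = -π * ((q:ℝ) - 2 * p) := by rw [cot_sum p q hp hpq]
  have hfin : π * (q:ℝ) * ((p:ℝ)/q - 1/2) * 2 = -π * ((q:ℝ) - 2 * p) := by
    field_simp; ring
  linarith
end

section
/- Gauss's digamma theorem: for positive integers p < q, ψ(p/q) = −γ − log(2πq) − (π/2)·cot(pπ/q) − 2·∑_{r=1}^{q−1} cos(2πrp/q)·log Γ(r/q). -/
open Real

open Filter Topology Set Finset
open Complex hiding digamma




lemma digamma_tendsto {x : ℝ} (hx : 0 < x) :
    Tendsto (fun n : ℕ ↦ Real.log n - ∑ k ∈ Finset.range n, 1 / (x + k)) atTop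
      (𝓝 (digamma x)) := by
  set f : ℝ → ℝ := Real.log ∘ Real.Gamma with hf
  have hc : ConvexOn ℝ (Ioi 0) f := Real.convexOn_log_Gamma
  have h_rec (y : ℝ) (hy : 0 < y) : f (y + 1) = f y + Real.log y := by
    simp only [f, Function.comp_apply, Real.Gamma_add_one hy.ne',
      Real.log_mul hy.ne' (Real.Gamma_pos_of_pos hy).ne', add_comm]
  have hder {y : ℝ} (hy : 0 < y) : DifferentiableAt ℝ f y := by
    have h' : ∀ m : ℕ, y ≠ -m := fun m h ↦ by
      have : (0:ℝ) ≤ (m:ℝ) := m.cast_nonneg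
      rw [h] at hy; linarith
    exact (Real.differentiableAt_Gamma h').log (Real.Gamma_ne_zero h')
  have hder_rec (y : ℝ) (hy : 0 < y) : deriv f (y + 1) = deriv f y + 1 / y := by
    rw [← deriv_comp_add_const, one_div, ← Real.deriv_log,
      ← deriv_add (hder <| by positivity) (Real.differentiableAt_log hy.ne')]
    apply Filter.EventuallyEq.deriv_eq
    filter_upwards [eventually_gt_nhds hy] using h_rec
  -- deriv f (x + n) = deriv f x + partial sum
  have key (n : ℕ) : deriv f (x + n) = deriv f x + ∑ k ∈ Finset.range n, 1 / (x + k) := by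
    induction n with
    | zero => simp
    | succ n ih =>
      have : x + (n + 1 : ℕ) = (x + n) + 1 := by push_cast; ring
      rw [this, hder_rec _ (by positivity), ih, Finset.sum_range_succ]
      ring
  -- slope bounds
  have hub (y : ℝ) (hy : 0 < y) : deriv f y ≤ Real.log y := by
    refine (hc.deriv_le_slope (mem_Ioi.mpr hy) (mem_Ioi.mpr (show (0:ℝ) < y + 1 by linarith))
      (by linarith) (hder hy)).trans (le_of_eq ?_)
    have h1 : y + 1 - y = 1 := by ring
    rw [slope_def_field, h_rec y hy, h1, div_one, add_sub_cancel_left]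
  have hlb (y : ℝ) (hy : 1 < y) : Real.log (y - 1) ≤ deriv f y := by
    have h0 : (0:ℝ) < y - 1 := by linarith
    refine (le_of_eq ?_).trans (hc.slope_le_deriv (mem_Ioi.mpr h0)
      (mem_Ioi.mpr (show (0:ℝ) < y by linarith)) (by linarith) (hder (by linarith)))
    have h1 : y - (y - 1) = 1 := by ring
    have h2 : f y = f (y - 1) + Real.log (y - 1) := by
      have := h_rec (y - 1) h0; rwa [sub_add_cancel] at this
    rw [slope_def_field, h2, h1, div_one, add_sub_cancel_left]
  -- digamma x = deriv f x
  have hdig : digamma x = deriv f x := by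
    rw [digamma, hf, Function.comp_def,
      deriv.log (Real.differentiableAt_Gamma (fun m h ↦ by
        have : (0:ℝ) ≤ (m:ℝ) := m.cast_nonneg
        rw [h] at hx; linarith))
        (Real.Gamma_pos_of_pos hx).ne']
  rw [hdig]
  -- squeeze
  have heq (n : ℕ) : Real.log n - ∑ k ∈ Finset.range n, 1 / (x + k)
      = deriv f x + (Real.log n - deriv f (x + n)) := by
    rw [key]; ring
  have hto : Tendsto (fun n : ℕ ↦ Real.log n - deriv f (x + n)) atTop (𝓝 0) := by
    have h1 : Tendsto (fun n : ℕ ↦ Real.log n - Real.log (x + n)) atTop (𝓝 0) := by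
      have : ∀ᶠ n : ℕ in atTop, Real.log n - Real.log (x + n) = -Real.log (1 + x / n) := by
        filter_upwards [eventually_gt_atTop 0] with n hn
        have hn' : (0:ℝ) < n := by exact_mod_cast hn
        rw [← Real.log_div hn'.ne' (by positivity), ← Real.log_inv]
        congr 1
        field_simp
        ring
      rw [tendsto_congr' this]
      have : Tendsto (fun n : ℕ ↦ 1 + x / n) atTop (𝓝 1) := by
        have := Filter.Tendsto.const_div_atTop (tendsto_natCast_atTop_atTop (R := ℝ)) x
        simpa using (tendsto_const_nhds (x := (1:ℝ)) (f := atTop)).add this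
      have := ((Real.continuousAt_log one_ne_zero).tendsto.comp this).neg
      simpa using this
    have h2 : Tendsto (fun n : ℕ ↦ Real.log n - Real.log (x + n - 1)) atTop (𝓝 0) := by
      have : ∀ᶠ n : ℕ in atTop, Real.log n - Real.log (x + n - 1) = -Real.log ((x + n - 1) / n) := by
        filter_upwards [eventually_gt_atTop 1] with n hn
        have hn' : (1:ℝ) < n := by exact_mod_cast hn
        have hpos : (0:ℝ) < x + n - 1 := by linarith
        rw [← Real.log_div (by positivity) hpos.ne']
        rw [← Real.log_inv]
        congr 1
        rw [inv_div]
      rw [tendsto_congr' this]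
      have : Tendsto (fun n : ℕ ↦ (x + n - 1) / n) atTop (𝓝 1) := by
        have h3 : ∀ᶠ n : ℕ in atTop, (x + n - 1) / n = 1 + (x - 1) / n := by
          filter_upwards [eventually_gt_atTop 0] with n hn
          have hn' : (0:ℝ) < n := by exact_mod_cast hn
          field_simp
          ring
        rw [tendsto_congr' h3]
        have := Filter.Tendsto.const_div_atTop (tendsto_natCast_atTop_atTop (R := ℝ)) (x - 1)
        simpa using (tendsto_const_nhds (x := (1:ℝ)) (f := atTop)).add this
      have := ((Real.continuousAt_log one_ne_zero).tendsto.comp this).neg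
      simpa using this
    refine tendsto_of_tendsto_of_tendsto_of_le_of_le' h1 h2 ?_ ?_
    · filter_upwards [eventually_ge_atTop 1] with n hn
      have hn' : (1:ℝ) ≤ n := by exact_mod_cast hn
      have := hub (x + n) (by positivity)
      linarith
    · filter_upwards [eventually_ge_atTop 1] with n hn
      have hn' : (1:ℝ) ≤ n := by exact_mod_cast hn
      have := hlb (x + n) (by linarith)
      have h4 : x + (n:ℝ) - 1 = x + n - 1 := by ring
      linarith
  simp only [heq]
  simpa using (tendsto_const_nhds (x := deriv f x) (f := atTop)).add hto

lemma slit (ω : ℂ) (hω : ‖ω‖ = 1) (h1 : ω ≠ 1) : 1 - ω ∈ Complex.slitPlane := by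
  rw [Complex.mem_slitPlane_iff]
  rcases lt_or_ge ω.re 1 with h | h
  · left; simpa [Complex.sub_re] using h
  · exfalso
    apply h1
    have hre : ω.re ≤ 1 := by
      have := Complex.abs_re_le_norm ω
      rw [hω] at this
      exact (abs_le.mp this).2
    have hre1 : ω.re = 1 := le_antisymm hre h
    have hsq : ω.re ^ 2 + ω.im ^ 2 = 1 := by
      have := Complex.sq_norm ω
      rw [Complex.normSq_apply] at this
      nlinarith [hω]
    have him : ω.im = 0 := by nlinarith
    exact Complex.ext (by simp [hre1]) (by simp [him])

lemma tendsto_sum_pow_div (ω : ℂ) (hω : ‖ω‖ = 1) (h1 : ω ≠ 1) :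
    Tendsto (fun N ↦ ∑ m ∈ Finset.range N, ω ^ m / m) atTop
      (𝓝 (-Complex.log (1 - ω))) := by
  set a : ℕ → ℂ := fun m ↦ ω ^ m / m with ha
  -- Cauchy via Dirichlet's test
  have hbdd : ∀ n, ‖∑ i ∈ Finset.range n, ω ^ (i + 1)‖ ≤ 2 / ‖ω - 1‖ := by
    intro n
    have hne : ω - 1 ≠ 0 := sub_ne_zero.mpr h1
    have : ∑ i ∈ Finset.range n, ω ^ (i + 1) = ω * ((ω ^ n - 1) / (ω - 1)) := by
      rw [← geom_sum_eq h1]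
      rw [Finset.mul_sum]
      simp [pow_succ, mul_comm]
    rw [this, norm_mul, hω, one_mul, norm_div]
    gcongr
    calc ‖ω ^ n - 1‖ ≤ ‖ω ^ n‖ + ‖(1:ℂ)‖ := norm_sub_le _ _
    _ = 2 := by rw [norm_pow, hω]; norm_num
  have hanti : Antitone (fun i : ℕ ↦ ((i:ℝ) + 1)⁻¹) := by
    intro i j hij
    have : (i:ℝ) + 1 ≤ (j:ℝ) + 1 := by exact_mod_cast by omega
    exact inv_anti₀ (by positivity) this
  have h0 : Tendsto (fun i : ℕ ↦ ((i:ℝ) + 1)⁻¹) atTop (𝓝 0) := by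
    have := tendsto_natCast_atTop_atTop (R := ℝ)
    exact Tendsto.inv_tendsto_atTop (by exact tendsto_atTop_add_const_right _ 1 this)
  have hcs : CauchySeq fun n ↦ ∑ i ∈ Finset.range n,
      ((i:ℝ) + 1)⁻¹ • (ω ^ (i + 1)) :=
    hanti.cauchySeq_series_mul_of_tendsto_zero_of_bounded h0 hbdd
  obtain ⟨l, hl⟩ := cauchySeq_tendsto_of_complete hcs
  -- identify partial sums
  have hshift : ∀ n, ∑ i ∈ Finset.range n, ((i:ℝ) + 1)⁻¹ • (ω ^ (i + 1))
      = ∑ m ∈ Finset.range (n + 1), a m := by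
    intro n
    rw [Finset.sum_range_succ' (fun m ↦ a m) n]
    simp only [ha]
    simp [div_eq_inv_mul, mul_comm]
  have hpart : Tendsto (fun n ↦ ∑ m ∈ Finset.range n, a m) atTop (𝓝 l) := by
    have : Tendsto (fun n ↦ ∑ m ∈ Finset.range (n + 1), a m) atTop (𝓝 l) := by
      simp only [← hshift]; exact hl
    exact (tendsto_add_atTop_iff_nat 1).mp this
  -- Abel's limit theorem
  have habel := Complex.tendsto_tsum_powerSeries_nhdsWithin_stolzSet (f := a) hpart (M := 2)
  have hreal : Tendsto (fun x : ℝ ↦ ∑' n, a n * (x:ℂ) ^ n) (𝓝[<] (1:ℝ)) (𝓝 l) := by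
    have := habel.comp (le_trans (Filter.map_mono le_rfl)
      (Complex.nhdsWithin_lt_le_nhdsWithin_stolzSet (one_lt_two)))
    exact this
  -- identify the function with -log on (-1, 1)
  have heq : ∀ᶠ x : ℝ in 𝓝[<] (1:ℝ), (∑' n, a n * (x:ℂ) ^ n) = -Complex.log (1 - ω * x) := by
    have hev : ∀ᶠ x : ℝ in 𝓝[<] (1:ℝ), x ∈ Set.Ioo (-1:ℝ) 1 := by
      have : Set.Ioo (-1:ℝ) 1 ∈ 𝓝[<] (1:ℝ) := by
        apply Ioo_mem_nhdsLT_of_mem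
        constructor <;> norm_num
      exact this
    filter_upwards [hev] with x hx
    have hnorm : ‖ω * (x:ℂ)‖ < 1 := by
      rw [norm_mul, hω, one_mul, Complex.norm_real, Real.norm_eq_abs]
      exact abs_lt.mpr ⟨hx.1, hx.2⟩
    have := (Complex.hasSum_taylorSeries_neg_log hnorm).tsum_eq
    rw [← this]
    congr 1
    ext n
    rw [ha]
    rw [mul_pow]
    ring
  -- continuity of -log(1 - ω x) at x = 1
  have hcont : Tendsto (fun x : ℝ ↦ -Complex.log (1 - ω * x)) (𝓝[<] (1:ℝ))
      (𝓝 (-Complex.log (1 - ω))) := by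
    have hmap : Tendsto (fun x : ℝ ↦ 1 - ω * (x:ℂ)) (𝓝[<] (1:ℝ)) (𝓝 (1 - ω)) := by
      have : Continuous (fun x : ℝ ↦ 1 - ω * (x:ℂ)) :=
        continuous_const.sub (continuous_const.mul Complex.continuous_ofReal)
      have h2 : Tendsto (fun x : ℝ ↦ 1 - ω * (x:ℂ)) (𝓝[<] (1:ℝ)) (𝓝 (1 - ω * ((1:ℝ):ℂ))) :=
        Tendsto.mono_left (this.tendsto 1) (nhdsWithin_le_nhds (s := Set.Iio 1))
      simpa using h2
    exact ((continuousAt_clog (slit ω hω h1)).tendsto.comp hmap).neg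
  have : Tendsto (fun x : ℝ ↦ ∑' n, a n * (x:ℂ) ^ n) (𝓝[<] (1:ℝ))
      (𝓝 (-Complex.log (1 - ω))) := Filter.Tendsto.congr' (heq.mono fun x h ↦ h.symm) hcont
  have hlu : l = -Complex.log (1 - ω) := tendsto_nhds_unique hreal this
  rwa [hlu] at hpart

noncomputable def zq (q : ℕ) : ℂ := Complex.exp (2 * Real.pi * Complex.I / q)

lemma zq_ne_zero (q : ℕ) : zq q ≠ 0 := Complex.exp_ne_zero _

lemma zq_zpow_eq_one_iff {q : ℕ} (hq : 0 < q) (j : ℤ) :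
    zq q ^ j = 1 ↔ (q:ℤ) ∣ j := by
  rw [zq, ← Complex.exp_int_mul, Complex.exp_eq_one_iff]
  have hq' : (q:ℂ) ≠ 0 := Nat.cast_ne_zero.mpr hq.ne'
  have h2πI : (2 * (Real.pi:ℂ) * Complex.I) ≠ 0 := by
    simp [Real.pi_ne_zero, Complex.I_ne_zero]
  constructor
  · rintro ⟨n, hn⟩
    have h5 : (j:ℂ) * (2 * (Real.pi:ℂ) * Complex.I) = ((n * q : ℤ) : ℂ) * (2 * (Real.pi:ℂ) * Complex.I) := by
      have := congrArg (· * (q:ℂ)) hn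
      push_cast
      field_simp at this
      push_cast at this
      linear_combination (2 * (Real.pi:ℂ) * Complex.I) * this
    have h3 : (j:ℂ) = ((n * q : ℤ) : ℂ) := mul_right_cancel₀ h2πI h5
    have h4 : j = n * q := by exact_mod_cast h3
    exact ⟨n, by rw [h4]; ring⟩
  · rintro ⟨n, rfl⟩
    refine ⟨n, ?_⟩
    push_cast
    field_simp

lemma zq_pow_norm {q : ℕ} (hq : 0 < q) (r : ℕ) : ‖zq q ^ r‖ = 1 := by
  rw [norm_pow, zq, Complex.norm_exp]
  have : (2 * (Real.pi:ℂ) * Complex.I / q).re = 0 := by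
    have : (2 * (Real.pi:ℂ) * Complex.I / q) = ((2 * Real.pi / q : ℝ) : ℂ) * Complex.I := by
      push_cast; ring
    rw [this]
    simp
  rw [this, Real.exp_zero, one_pow]

lemma zq_inner_sum {q p : ℕ} (hq : 0 < q) (hp : 0 < p) (hpq : p < q) (m : ℕ) :
    ∑ r ∈ range q, (((zq q) ^ p)⁻¹ * (zq q) ^ m) ^ r
      = if m % q = p then (q:ℂ) else 0 := by
  set ζ := zq q with hζ
  have hζ0 := zq_ne_zero q
  have hu : (ζ ^ p)⁻¹ * ζ ^ m = ζ ^ ((m:ℤ) - p) := by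
    rw [zpow_sub₀ hζ0, zpow_natCast, zpow_natCast]
    ring
  have hmod : ((q:ℤ) ∣ (m:ℤ) - (p:ℤ)) ↔ m % q = p := by
    rw [← Int.modEq_iff_dvd, Int.ModEq, ← Int.natCast_mod, ← Int.natCast_mod, Nat.cast_inj,
      Nat.mod_eq_of_lt hpq]
    exact eq_comm
  by_cases h : m % q = p
  · rw [if_pos h, hu, (zq_zpow_eq_one_iff hq _).mpr (hmod.mpr h)]
    simp
  · have hne : ζ ^ ((m:ℤ) - p) ≠ 1 := by
      rw [Ne, zq_zpow_eq_one_iff hq]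
      exact fun hdvd ↦ h (hmod.mp hdvd)
    rw [if_neg h, hu, geom_sum_eq hne]
    have : (ζ ^ ((m:ℤ) - p)) ^ q = 1 := by
      rw [← zpow_natCast, ← zpow_mul, zq_zpow_eq_one_iff hq]
      exact ⟨(m:ℤ) - p, by ring⟩
    rw [this, sub_self, zero_div]

lemma fourier_split {p q : ℕ} (hq : 0 < q) (hp : 0 < p) (hpq : p < q) (N : ℕ) :
    (∑ k ∈ range N, (q:ℂ)/(p + q*k))
      = (∑ m ∈ range (q*N+1), 1/(m:ℂ))
        + ∑ r ∈ Finset.Ico 1 q, (((zq q)^p)⁻¹)^r * ∑ m ∈ range (q*N+1), ((zq q)^r)^m/(m:ℂ) := by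
  set ζ := zq q with hζ
  set w := (ζ^p)⁻¹ with hw
  have step1 : (∑ r ∈ range q, w^r * ∑ m ∈ range (q*N+1), (ζ^r)^m/(m:ℂ))
      = (∑ m ∈ range (q*N+1), 1/(m:ℂ))
        + ∑ r ∈ Finset.Ico 1 q, w^r * ∑ m ∈ range (q*N+1), (ζ^r)^m/(m:ℂ) := by
    rw [range_eq_Ico, Finset.sum_eq_sum_Ico_succ_bot hq]
    simp
  rw [← step1]
  have step2 : ∀ r ∈ range q, w^r * ∑ m ∈ range (q*N+1), (ζ^r)^m/(m:ℂ)
      = ∑ m ∈ range (q*N+1), (w * ζ^m)^r/(m:ℂ) := by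
    intro r _
    rw [Finset.mul_sum]
    refine Finset.sum_congr rfl fun m _ ↦ ?_
    rw [mul_pow, ← pow_mul, ← pow_mul, mul_comm r m, mul_div_assoc]
  rw [Finset.sum_congr rfl step2, Finset.sum_comm]
  have step3 : ∀ m ∈ range (q*N+1), ∑ r ∈ range q, (w * ζ^m)^r/(m:ℂ)
      = if m % q = p then (q:ℂ)/m else 0 := by
    intro m _
    rw [← Finset.sum_div, zq_inner_sum hq hp hpq m]
    split_ifs <;> simp
  rw [Finset.sum_congr rfl step3]
  -- reindex
  rw [eq_comm]
  rw [← Finset.sum_filter]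
  refine Finset.sum_nbij' (fun m ↦ m / q) (fun k ↦ p + q * k) ?_ ?_ ?_ ?_ ?_
  · intro m hm
    rw [Finset.mem_filter, Finset.mem_range] at hm
    obtain ⟨h1, h2⟩ := hm
    rw [Finset.mem_range, Nat.div_lt_iff_lt_mul hq, mul_comm N q]
    have hmq : m ≠ q * N := by
      intro h
      rw [h, Nat.mul_mod_right] at h2
      omega
    show m < q * N
    omega
  · intro k hk
    rw [Finset.mem_range] at hk
    rw [Finset.mem_filter, Finset.mem_range]
    show p + q * k < q * N + 1 ∧ (p + q * k) % q = p
    have h1 : q * (k + 1) ≤ q * N := Nat.mul_le_mul_left q hk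
    rw [Nat.mul_add, Nat.mul_one] at h1
    constructor
    · show p + q * k < q * N + 1
      omega
    · rw [Nat.add_mul_mod_self_left, Nat.mod_eq_of_lt hpq]
  · intro m hm
    rw [Finset.mem_filter] at hm
    have hdm := Nat.div_add_mod m q
    show p + q * (m / q) = m
    omega
  · intro k _
    show (p + q * k) / q = k
    rw [Nat.add_mul_div_left _ _ hq, Nat.div_eq_of_lt hpq, zero_add]
  · intro m hm
    rw [Finset.mem_filter] at hm
    have hdm := Nat.div_add_mod m q
    have hval : p + q * (m / q) = m := by omega
    have hcast : (p:ℂ) + q * (m / q : ℕ) = m := by exact_mod_cast congrArg (Nat.cast : ℕ → ℂ) hval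
    rw [hcast]

local notation "γ" => Real.eulerMascheroniConstant

lemma harmonic_cast (M : ℕ) : ∑ m ∈ range (M+1), 1/(m:ℝ) = ((harmonic M : ℚ) : ℝ) := by
  rw [Finset.sum_range_succ' (fun m ↦ 1/(m:ℝ)) M, harmonic]
  push_cast
  simp [one_div]

lemma tendsto_log_sub_harmonic {q : ℕ} (hq : 0 < q) :
    Tendsto (fun N : ℕ ↦ Real.log N - ∑ m ∈ range (q*N+1), 1/(m:ℝ)) atTop
      (𝓝 (-γ - Real.log q)) := by
  have hqN : Tendsto (fun N : ℕ ↦ q * N) atTop atTop :=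
    tendsto_atTop_mono (fun n ↦ Nat.le_mul_of_pos_left n hq) tendsto_id
  have h1 := Real.tendsto_harmonic_sub_log.comp hqN
  have h3 := (h1.add_const (Real.log q)).neg
  rw [show -(γ + Real.log q) = -γ - Real.log q by ring] at h3
  apply h3.congr'
  filter_upwards [eventually_ge_atTop 1] with N hN
  simp only [Function.comp_apply]
  rw [harmonic_cast (q*N)]
  have hN' : (0:ℝ) < N := by exact_mod_cast hN
  have hc : ((q*N : ℕ):ℝ) = (q:ℝ) * N := by push_cast; ring
  rw [hc, Real.log_mul (by positivity) (by positivity)]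
  ring

lemma tendsto_piece_r {q : ℕ} (hq : 0 < q) {r : ℕ} (hr : r ∈ Finset.Ico 1 q) :
    Tendsto (fun N : ℕ ↦ ∑ m ∈ range (q*N+1), ((zq q)^r)^m/(m:ℂ)) atTop
      (𝓝 (-Complex.log (1 - (zq q)^r))) := by
  rw [Finset.mem_Ico] at hr
  have hω : ‖(zq q)^r‖ = 1 := zq_pow_norm hq r
  have h1 : (zq q)^r ≠ 1 := by
    rw [← zpow_natCast, Ne, zq_zpow_eq_one_iff hq, Int.natCast_dvd_natCast]
    intro hdvd
    have := Nat.le_of_dvd (by omega) hdvd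
    omega
  have hbase := tendsto_sum_pow_div _ hω h1
  have hqN : Tendsto (fun N : ℕ ↦ q * N + 1) atTop atTop :=
    tendsto_atTop_mono (fun n ↦ (Nat.le_mul_of_pos_left n hq).trans (Nat.le_succ _)) tendsto_id
  exact hbase.comp hqN

lemma key_limit {p q : ℕ} (hq : 0 < q) (hp : 0 < p) (hpq : p < q) :
    Tendsto (fun N : ℕ ↦ ((Real.log N : ℝ) : ℂ) - ∑ k ∈ range N, (q:ℂ)/(p + q*k)) atTop
      (𝓝 (((-γ - Real.log q : ℝ) : ℂ)
        - ∑ r ∈ Finset.Ico 1 q, (((zq q)^p)⁻¹)^r * -Complex.log (1 - (zq q)^r))) := by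
  have hA : Tendsto (fun N : ℕ ↦ ((Real.log N : ℝ):ℂ) - ∑ m ∈ range (q*N+1), 1/(m:ℂ)) atTop
      (𝓝 ((-γ - Real.log q : ℝ):ℂ)) := by
    have := (Complex.continuous_ofReal.tendsto _).comp (tendsto_log_sub_harmonic hq)
    apply this.congr
    intro N
    simp only [Function.comp_apply]
    push_cast
    rfl
  have hB : Tendsto (fun N : ℕ ↦ ∑ r ∈ Finset.Ico 1 q,
        (((zq q)^p)⁻¹)^r * ∑ m ∈ range (q*N+1), ((zq q)^r)^m/(m:ℂ)) atTop
      (𝓝 (∑ r ∈ Finset.Ico 1 q, (((zq q)^p)⁻¹)^r * -Complex.log (1 - (zq q)^r))) :=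
    tendsto_finset_sum _ (fun r hr ↦ Tendsto.const_mul _ (tendsto_piece_r hq hr))
  have := hA.sub hB
  apply this.congr
  intro N
  rw [fourier_split hq hp hpq N]
  ring



lemma zq_pow_eq {q : ℕ} (hq : 0 < q) (r : ℕ) :
    (zq q) ^ r = Complex.exp (((2 * π * r / q : ℝ) : ℂ) * Complex.I) := by
  rw [zq, ← Complex.exp_nat_mul]
  congr 1
  push_cast
  ring

lemma zq_inv_pow_eq {q : ℕ} (hq : 0 < q) (p r : ℕ) :
    (((zq q) ^ p)⁻¹) ^ r
      = ((Real.cos (2 * π * r * p / q) : ℝ) : ℂ)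
        - ((Real.sin (2 * π * r * p / q) : ℝ) : ℂ) * Complex.I := by
  rw [inv_pow, ← pow_mul, zq_pow_eq hq, ← Complex.exp_neg]
  have : -(((2 * π * ((p * r : ℕ) : ℝ) / q : ℝ) : ℂ) * Complex.I)
      = ((-(2 * π * r * p / q) : ℝ) : ℂ) * Complex.I := by
    push_cast; ring
  rw [this, Complex.exp_mul_I]
  simp only [← Complex.ofReal_cos, ← Complex.ofReal_sin]
  rw [Real.cos_neg, Real.sin_neg]
  push_cast
  ring

lemma log_one_sub_zq {q r : ℕ} (hq : 0 < q) (hr1 : 1 ≤ r) (hrq : r < q) :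
    Complex.log (1 - (zq q) ^ r)
      = ((Real.log (2 * Real.sin (π * r / q)) : ℝ) : ℂ)
        + ((π * r / q - π / 2 : ℝ) : ℂ) * Complex.I := by
  have hπ := Real.pi_pos
  have hq' : (0:ℝ) < q := by exact_mod_cast hq
  have hr' : (0:ℝ) < r := by exact_mod_cast hr1
  have hrq' : (r:ℝ) < q := by exact_mod_cast hrq
  have ha1 : 0 < π * r / q := by positivity
  have ha2 : π * r / q < π := by
    rw [div_lt_iff₀ hq']
    have : π * r < π * q := by nlinarith
    linarith
  have hs : 0 < Real.sin (π * r / q) := Real.sin_pos_of_pos_of_lt_pi ha1 ha2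
  have hexp : 1 - (zq q) ^ r
      = Complex.exp (((Real.log (2 * Real.sin (π * r / q)) : ℝ) : ℂ)
          + ((π * r / q - π / 2 : ℝ) : ℂ) * Complex.I) := by
    rw [zq_pow_eq hq, Complex.exp_add, Complex.exp_mul_I, Complex.exp_mul_I,
      ← Complex.ofReal_exp, Real.exp_log (by positivity)]
    simp only [← Complex.ofReal_cos, ← Complex.ofReal_sin]
    rw [Complex.ext_iff]
    constructor
    · simp only [Complex.sub_re, Complex.one_re, Complex.add_re, Complex.mul_re,
        Complex.mul_im, Complex.ofReal_re, Complex.ofReal_im, Complex.I_re, Complex.I_im,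
        Complex.add_im, Complex.sub_im, Complex.one_im]
      have hc2 : Real.cos (2 * π * r / q) = 1 - 2 * Real.sin (π * r / q) ^ 2 := by
        have h2 : 2 * π * (r:ℝ) / q = 2 * (π * r / q) := by ring
        rw [h2, Real.cos_two_mul']
        nlinarith [Real.sin_sq_add_cos_sq (π * r / q)]
      have hcos : Real.cos (π * r / q - π / 2) = Real.sin (π * r / q) := by
        rw [Real.cos_sub]
        simp
      rw [hc2, hcos]
      ring
    · simp only [Complex.sub_re, Complex.one_re, Complex.add_re, Complex.mul_re,
        Complex.mul_im, Complex.ofReal_re, Complex.ofReal_im, Complex.I_re, Complex.I_im,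
        Complex.add_im, Complex.sub_im, Complex.one_im]
      have hs2 : Real.sin (2 * π * r / q) = 2 * Real.sin (π * r / q) * Real.cos (π * r / q) := by
        have h2 : 2 * π * (r:ℝ) / q = 2 * (π * r / q) := by ring
        rw [h2, Real.sin_two_mul]
      have hsin : Real.sin (π * r / q - π / 2) = -Real.cos (π * r / q) := by
        rw [Real.sin_sub]
        simp
      rw [hs2, hsin]
      ring
  rw [hexp, Complex.log_exp]
  · simp only [Complex.add_im, Complex.ofReal_im, Complex.mul_im, Complex.ofReal_re,
      Complex.I_im, Complex.I_re]
    linarith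
  · simp only [Complex.add_im, Complex.ofReal_im, Complex.mul_im, Complex.ofReal_re,
      Complex.I_im, Complex.I_re]
    linarith

section TrigSums
variable {p q : ℕ}

lemma zp_ne_one (hq : 0 < q) (hp : 0 < p) (hpq : p < q) : (zq q) ^ p ≠ 1 := by
  rw [← zpow_natCast, Ne, zq_zpow_eq_one_iff hq, Int.natCast_dvd_natCast]
  intro hdvd
  have := Nat.le_of_dvd hp hdvd
  omega

lemma zp_pow_q (hq : 0 < q) : ((zq q) ^ p) ^ q = 1 := by
  rw [← pow_mul, ← zpow_natCast, zq_zpow_eq_one_iff hq]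
  exact ⟨p, by push_cast; ring⟩

lemma geom_sum_zp (hq : 0 < q) (hp : 0 < p) (hpq : p < q) :
    ∑ r ∈ Finset.range q, ((zq q) ^ p) ^ r = 0 := by
  rw [geom_sum_eq (zp_ne_one hq hp hpq), zp_pow_q hq, sub_self, zero_div]

lemma zp_pow_r (hq : 0 < q) (r : ℕ) :
    ((zq q) ^ p) ^ r = ((Real.cos (2 * π * r * p / q) : ℝ) : ℂ)
      + ((Real.sin (2 * π * r * p / q) : ℝ) : ℂ) * Complex.I := by
  rw [← pow_mul, zq_pow_eq hq, Complex.exp_mul_I]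
  simp only [← Complex.ofReal_cos, ← Complex.ofReal_sin]
  have h : 2 * π * ((p * r : ℕ) : ℝ) / q = 2 * π * r * p / q := by push_cast; ring
  rw [h]

lemma sum_cos_eq (hq : 0 < q) (hp : 0 < p) (hpq : p < q) :
    ∑ r ∈ Finset.Ico 1 q, Real.cos (2 * π * r * p / q) = -1 := by
  have h0 := geom_sum_zp hq hp hpq
  have hre := congrArg Complex.re h0
  rw [Complex.re_sum] at hre
  simp only [zp_pow_r hq] at hre
  simp only [Complex.add_re, Complex.ofReal_re, Complex.mul_re, Complex.ofReal_im,
    Complex.I_re, Complex.I_im, mul_zero, mul_one, zero_mul, sub_zero, zero_sub, add_zero,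
    Complex.zero_re] at hre
  rw [Finset.range_eq_Ico, Finset.sum_eq_sum_Ico_succ_bot hq] at hre
  norm_num at hre
  linarith [hre]

lemma sum_sin_eq (hq : 0 < q) (hp : 0 < p) (hpq : p < q) :
    ∑ r ∈ Finset.Ico 1 q, Real.sin (2 * π * r * p / q) = 0 := by
  have h0 := geom_sum_zp hq hp hpq
  have him := congrArg Complex.im h0
  rw [Complex.im_sum] at him
  simp only [zp_pow_r hq] at him
  simp only [Complex.add_im, Complex.ofReal_im, Complex.mul_im, Complex.ofReal_re,
    Complex.I_re, Complex.I_im, mul_zero, mul_one, zero_mul, add_zero, zero_add,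
    Complex.zero_im] at him
  rw [Finset.range_eq_Ico, Finset.sum_eq_sum_Ico_succ_bot hq] at him
  norm_num at him
  exact him

lemma sum_r_zp (hq : 0 < q) (hp : 0 < p) (hpq : p < q) :
    ((zq q) ^ p - 1) * ∑ r ∈ Finset.range q, (r : ℂ) * ((zq q) ^ p) ^ r = q := by
  set z := (zq q) ^ p with hz
  have hsum0 : ∑ r ∈ Finset.range q, z ^ r = 0 := geom_sum_zp hq hp hpq
  have hzq : z ^ q = 1 := zp_pow_q hq
  have expand : (z - 1) * ∑ r ∈ Finset.range q, (r : ℂ) * z ^ r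
      = (∑ r ∈ Finset.range q, (((r:ℂ)+1) * z ^ (r+1) - (r:ℂ) * z ^ r))
        - ∑ r ∈ Finset.range q, z ^ (r+1) := by
    rw [Finset.mul_sum, ← Finset.sum_sub_distrib]
    refine Finset.sum_congr rfl fun r _ ↦ ?_
    rw [pow_succ]
    ring
  have htel : ∑ r ∈ Finset.range q, (((r:ℂ)+1) * z ^ (r+1) - (r:ℂ) * z ^ r) = q * z ^ q := by
    have := Finset.sum_range_sub (fun r : ℕ ↦ (r:ℂ) * z ^ r) q
    simp only [Nat.cast_zero, zero_mul, sub_zero] at this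
    rw [← this]
    refine Finset.sum_congr rfl fun r _ ↦ ?_
    push_cast
    ring
  have hshift : ∑ r ∈ Finset.range q, z ^ (r+1) = z * ∑ r ∈ Finset.range q, z ^ r := by
    rw [Finset.mul_sum]
    refine Finset.sum_congr rfl fun r _ ↦ ?_
    rw [pow_succ]
    ring
  rw [expand, htel, hshift, hsum0, hzq, mul_zero, sub_zero, mul_one]

lemma sum_r_sin_eq (hq : 0 < q) (hp : 0 < p) (hpq : p < q) :
    ∑ r ∈ Finset.Ico 1 q, (r:ℝ) * Real.sin (2 * π * r * p / q)
      = -(q/2) * (Real.cos (π * p / q) / Real.sin (π * p / q)) := by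
  have hπ := Real.pi_pos
  have hq' : (0:ℝ) < q := by exact_mod_cast hq
  have hp' : (0:ℝ) < p := by exact_mod_cast hp
  have hpq' : (p:ℝ) < q := by exact_mod_cast hpq
  have ha1 : 0 < π * p / q := by positivity
  have ha2 : π * p / q < π := by
    rw [div_lt_iff₀ hq']; nlinarith
  have hs : 0 < Real.sin (π * p / q) := Real.sin_pos_of_pos_of_lt_pi ha1 ha2
  set z := (zq q) ^ p with hz
  set W : ℂ := ((-(q:ℝ)/2 : ℝ) : ℂ)
    + ((-((q:ℝ)/2) * (Real.cos (π * p / q) / Real.sin (π * p / q)) : ℝ) : ℂ) * Complex.I with hW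
  have hz1 : z - 1 ≠ 0 := sub_ne_zero.mpr (zp_ne_one hq hp hpq)
  have hzw : (z - 1) * W = q := by
    have hzer : z = ((Real.cos (2 * π * 1 * p / q) : ℝ) : ℂ)
        + ((Real.sin (2 * π * 1 * p / q) : ℝ) : ℂ) * Complex.I := by
      have := zp_pow_r (p := p) hq 1
      rwa [pow_one, Nat.cast_one] at this
    rw [hzer, hW]
    have hc2 : Real.cos (2 * π * 1 * p / q) = 1 - 2 * Real.sin (π * p / q) ^ 2 := by
      have h2 : 2 * π * 1 * (p:ℝ) / q = 2 * (π * p / q) := by ring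
      rw [h2, Real.cos_two_mul']
      nlinarith [Real.sin_sq_add_cos_sq (π * p / q)]
    have hs2 : Real.sin (2 * π * 1 * p / q)
        = 2 * Real.sin (π * p / q) * Real.cos (π * p / q) := by
      have h2 : 2 * π * 1 * (p:ℝ) / q = 2 * (π * p / q) := by ring
      rw [h2, Real.sin_two_mul]
    rw [hc2, hs2, Complex.ext_iff]
    constructor
    · simp only [Complex.mul_re, Complex.sub_re, Complex.add_re, Complex.ofReal_re,
        Complex.mul_im, Complex.sub_im, Complex.add_im, Complex.ofReal_im,
        Complex.I_re, Complex.I_im, Complex.one_re, Complex.one_im, Complex.natCast_re]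
      field_simp
      linear_combination (2 * (q:ℝ) * Real.sin (π * p / q)) * Real.sin_sq_add_cos_sq (π * ↑p / ↑q)
    · simp only [Complex.mul_re, Complex.sub_re, Complex.add_re, Complex.ofReal_re,
        Complex.mul_im, Complex.sub_im, Complex.add_im, Complex.ofReal_im,
        Complex.I_re, Complex.I_im, Complex.one_re, Complex.one_im, Complex.natCast_im]
      field_simp
      ring
  have hW_eq : ∑ r ∈ Finset.range q, (r : ℂ) * z ^ r = W := by
    have h1 := sum_r_zp hq hp hpq
    rw [← hz] at h1
    have := mul_left_cancel₀ hz1 (h1.trans hzw.symm)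
    exact this
  have him := congrArg Complex.im hW_eq
  rw [Complex.im_sum] at him
  simp only [hz, zp_pow_r hq] at him
  have hterm : ∀ r : ℕ, ((r:ℂ) * (((Real.cos (2 * π * r * p / q) : ℝ) : ℂ)
      + ((Real.sin (2 * π * r * p / q) : ℝ) : ℂ) * Complex.I)).im
      = (r:ℝ) * Real.sin (2 * π * r * p / q) := by
    intro r
    simp only [Complex.mul_im, Complex.add_im, Complex.add_re, Complex.ofReal_re,
      Complex.ofReal_im, Complex.mul_re, Complex.I_re, Complex.I_im, Complex.natCast_re,
      Complex.natCast_im]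
    ring
  simp only [hterm] at him
  have hWim : W.im = -((q:ℝ)/2) * (Real.cos (π * p / q) / Real.sin (π * p / q)) := by
    simp only [hW, Complex.add_im, Complex.ofReal_im, Complex.mul_im, Complex.ofReal_re,
      Complex.I_im, Complex.I_re]
    ring
  rw [hWim] at him
  rw [Finset.range_eq_Ico, Finset.sum_eq_sum_Ico_succ_bot hq] at him
  norm_num at him
  rw [him]
  ring

end TrigSums

section GammaPair
variable {p q : ℕ}

lemma cos_reflect (hq : 0 < q) (hp : 0 < p) {r : ℕ} (hr1 : 1 ≤ r) (hrq : r < q) :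
    Real.cos (2 * π * (((q - r : ℕ)):ℝ) * p / q) = Real.cos (2 * π * r * p / q) := by
  have hq' : (0:ℝ) < q := by exact_mod_cast hq
  rw [Nat.cast_sub hrq.le]
  have h1 : 2 * π * ((q:ℝ) - r) * p / q = p * (2 * π) - 2 * π * r * p / q := by
    field_simp
  rw [h1, Real.cos_nat_mul_two_pi_sub]

lemma sum_cos_logGamma (hq : 0 < q) (hp : 0 < p) (hpq : p < q) :
    2 * ∑ r ∈ Finset.Ico 1 q, Real.cos (2 * π * r * p / q) * Real.log (Real.Gamma ((r:ℝ)/q))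
      = ∑ r ∈ Finset.Ico 1 q, Real.cos (2 * π * r * p / q)
          * (Real.log π - Real.log (Real.sin (π * r / q))) := by
  have hq' : (0:ℝ) < q := by exact_mod_cast hq
  have hswap : ∑ r ∈ Finset.Ico 1 q, Real.cos (2 * π * r * p / q) * Real.log (Real.Gamma ((r:ℝ)/q))
      = ∑ r ∈ Finset.Ico 1 q, Real.cos (2 * π * r * p / q)
          * Real.log (Real.Gamma ((((q - r : ℕ)):ℝ)/q)) := by
    refine Finset.sum_nbij' (fun r ↦ q - r) (fun r ↦ q - r) ?_ ?_ ?_ ?_ ?_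
    · intro r hr
      simp only [Finset.mem_Ico] at hr ⊢
      omega
    · intro r hr
      simp only [Finset.mem_Ico] at hr ⊢
      omega
    · intro r hr
      simp only [Finset.mem_Ico] at hr
      show q - (q - r) = r
      omega
    · intro r hr
      simp only [Finset.mem_Ico] at hr
      show q - (q - r) = r
      omega
    · intro r hr
      simp only [Finset.mem_Ico] at hr
      show Real.cos (2 * π * r * p / q) * Real.log (Real.Gamma ((r:ℝ)/q))
        = Real.cos (2 * π * (((q - r : ℕ)):ℝ) * p / q)
            * Real.log (Real.Gamma ((((q - (q - r) : ℕ)):ℝ)/q))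
      have h1 : q - (q - r) = r := by omega
      rw [h1, cos_reflect hq hp hr.1 hr.2]
  have hsum : ∀ r ∈ Finset.Ico 1 q,
      Real.cos (2 * π * r * p / q) * Real.log (Real.Gamma ((r:ℝ)/q))
        + Real.cos (2 * π * r * p / q) * Real.log (Real.Gamma ((((q - r : ℕ)):ℝ)/q))
      = Real.cos (2 * π * r * p / q) * (Real.log π - Real.log (Real.sin (π * r / q))) := by
    intro r hr
    rw [Finset.mem_Ico] at hr
    have hr1 : (0:ℝ) < r := by exact_mod_cast hr.1
    have hrq : (r:ℝ) < q := by exact_mod_cast hr.2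
    have hx1 : 0 < (r:ℝ)/q := by positivity
    have hx2 : (r:ℝ)/q < 1 := by rw [div_lt_one hq']; exact hrq
    have hcast : (((q - r : ℕ)):ℝ)/q = 1 - (r:ℝ)/q := by
      rw [Nat.cast_sub hr.2.le]
      field_simp
    have hg1 : 0 < Real.Gamma ((r:ℝ)/q) := Real.Gamma_pos_of_pos hx1
    have hg2 : 0 < Real.Gamma (1 - (r:ℝ)/q) := Real.Gamma_pos_of_pos (by linarith)
    rw [hcast, ← mul_add, ← Real.log_mul hg1.ne' hg2.ne', Real.Gamma_mul_Gamma_one_sub]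
    have hsin : 0 < Real.sin (π * ((r:ℝ)/q)) := by
      apply Real.sin_pos_of_pos_of_lt_pi
      · positivity
      · have := Real.pi_pos
        rw [mul_lt_iff_lt_one_right this] at *
        · nlinarith
    rw [Real.log_div Real.pi_pos.ne' hsin.ne']
    have : π * ((r:ℝ)/q) = π * r / q := by ring
    rw [this]
  rw [two_mul]
  nth_rewrite 2 [hswap]
  rw [← Finset.sum_add_distrib]
  exact Finset.sum_congr rfl hsum

end GammaPair

theorem gauss_digamma (p q : ℕ) (hp : 0 < p) (hpq : p < q) :
    digamma ((p : ℝ) / q) =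
      -Real.eulerMascheroniConstant - Real.log (2 * π * q)
        - π / 2 * (Real.cos (p * π / q) / Real.sin (p * π / q))
        - 2 * ∑ r ∈ Finset.Ico 1 q,
            Real.cos (2 * π * r * p / q) * Real.log (Real.Gamma ((r : ℝ) / q)) := by
  have hq : 0 < q := hp.trans hpq
  have hπ := Real.pi_pos
  have hq' : (0:ℝ) < q := by exact_mod_cast hq
  have hp' : (0:ℝ) < p := by exact_mod_cast hp
  have hx : 0 < (p:ℝ)/q := by positivity
  -- Step 1: limit formula with q/(p+qk)
  have hA' : Tendsto (fun n : ℕ ↦ Real.log n - ∑ k ∈ Finset.range n, (q:ℝ)/(p + q*k)) atTop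
      (𝓝 (digamma ((p:ℝ)/q))) := by
    apply (digamma_tendsto hx).congr
    intro n
    congr 1
    refine Finset.sum_congr rfl fun k _ ↦ ?_
    rw [show (p:ℝ)/q + k = ((p:ℝ) + q*k)/q by field_simp, one_div_div]
  -- Step 2: complex version
  have hC : Tendsto (fun N : ℕ ↦ ((Real.log N : ℝ):ℂ) - ∑ k ∈ Finset.range N, (q:ℂ)/(p + q*k))
      atTop (𝓝 ((digamma ((p:ℝ)/q) : ℝ):ℂ)) := by
    have := (Complex.continuous_ofReal.tendsto _).comp hA'
    apply this.congr
    intro N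
    simp only [Function.comp_apply]
    push_cast
    rfl
  have hEq := tendsto_nhds_unique hC (key_limit hq hp hpq)
  -- Step 3: take real parts
  have hre := congrArg Complex.re hEq
  rw [Complex.sub_re, Complex.ofReal_re, Complex.re_sum] at hre
  have hterm : ∀ r ∈ Finset.Ico 1 q, ((((zq q)^p)⁻¹)^r * -Complex.log (1 - (zq q)^r)).re
      = -(Real.cos (2*π*r*p/q) * Real.log (2*Real.sin (π*r/q))
          + Real.sin (2*π*r*p/q) * (π*r/q - π/2)) := by
    intro r hr
    rw [Finset.mem_Ico] at hr
    rw [zq_inv_pow_eq hq, log_one_sub_zq hq hr.1 hr.2]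
    simp only [Complex.mul_re, Complex.neg_re, Complex.neg_im, Complex.sub_re, Complex.sub_im,
      Complex.add_re, Complex.add_im, Complex.mul_im, Complex.ofReal_re, Complex.ofReal_im,
      Complex.I_re, Complex.I_im]
    ring
  rw [Finset.sum_congr rfl hterm, Finset.sum_neg_distrib, sub_neg_eq_add] at hre
  -- Step 4: evaluate the trigonometric sum
  set C : ℝ := Real.cos (π * p / q) / Real.sin (π * p / q) with hC_def
  set S1 : ℝ := ∑ r ∈ Finset.Ico 1 q, Real.cos (2*π*r*p/q) * Real.log (Real.sin (π*r/q))
    with hS1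
  have hT : ∑ r ∈ Finset.Ico 1 q, (Real.cos (2*π*r*p/q) * Real.log (2*Real.sin (π*r/q))
        + Real.sin (2*π*r*p/q) * (π*r/q - π/2))
      = -Real.log 2 + S1 - π/2 * C := by
    have hsplit : ∀ r ∈ Finset.Ico 1 q,
        Real.cos (2*π*r*p/q) * Real.log (2*Real.sin (π*r/q))
          + Real.sin (2*π*r*p/q) * (π*r/q - π/2)
        = Real.cos (2*π*r*p/q) * Real.log 2
          + Real.cos (2*π*r*p/q) * Real.log (Real.sin (π*r/q))
          + (π/q) * ((r:ℝ) * Real.sin (2*π*r*p/q))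
          + (-(π/2)) * Real.sin (2*π*r*p/q) := by
      intro r hr
      rw [Finset.mem_Ico] at hr
      have hr1 : (0:ℝ) < r := by exact_mod_cast hr.1
      have hrq : (r:ℝ) < q := by exact_mod_cast hr.2
      have hsin : 0 < Real.sin (π*r/q) := by
        apply Real.sin_pos_of_pos_of_lt_pi
        · positivity
        · rw [div_lt_iff₀ hq']; nlinarith
      rw [Real.log_mul two_ne_zero hsin.ne']
      field_simp
      ring
    rw [Finset.sum_congr rfl hsplit, Finset.sum_add_distrib, Finset.sum_add_distrib,
      Finset.sum_add_distrib, ← Finset.sum_mul, ← Finset.mul_sum, ← Finset.mul_sum,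
      sum_cos_eq hq hp hpq, sum_r_sin_eq hq hp hpq, sum_sin_eq hq hp hpq, ← hS1, ← hC_def]
    field_simp
    ring
  have hG : 2 * ∑ r ∈ Finset.Ico 1 q, Real.cos (2*π*r*p/q) * Real.log (Real.Gamma ((r:ℝ)/q))
      = -Real.log π - S1 := by
    rw [sum_cos_logGamma hq hp hpq]
    have : ∀ r ∈ Finset.Ico 1 q, Real.cos (2*π*r*p/q)
          * (Real.log π - Real.log (Real.sin (π*r/q)))
        = Real.cos (2*π*r*p/q) * Real.log π
          - Real.cos (2*π*r*p/q) * Real.log (Real.sin (π*r/q)) := fun r _ ↦ by ring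
    rw [Finset.sum_congr rfl this, Finset.sum_sub_distrib, ← Finset.sum_mul,
      sum_cos_eq hq hp hpq, ← hS1]
    ring
  -- Step 5: conclude
  rw [hT, Complex.ofReal_re] at hre
  rw [show (p:ℝ) * π / q = π * p / q by ring, ← hC_def,
    show (2:ℝ) * π * q = 2 * (π * q) by ring,
    Real.log_mul two_ne_zero (by positivity), Real.log_mul Real.pi_pos.ne' hq'.ne']
  linarith [hre, hG]
end
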